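/- arXiv:2101.04292 — 3 statements merged into one kernel-verified Lean document; each statement's English description precedes it below -/
import Mathlib

section
/- Let X̃ ∈ 𝕆^{n×k}. Then max_{Q ∈ 𝕆^{k×k}} f_θ(X̃Q) = g_θ(X̃) + ‖X̃ᵀD‖_tr/(tr(X̃ᵀBX̃))^θ, and the maximum is attained at Q_opt = UVᵀ, where U, V ∈ 𝕆^{k×k} are the factors of any singular value decomposition X̃ᵀD = UΣVᵀ. -/
open Matrix

noncomputable section

/-- `f_θ(X) = tr(XᵀAX + XᵀD) / (tr(XᵀBX))^θ`. -/
def fTheta {n k : ℕ} (A B : Matrix (Fin n) (Fin n) ℝ) (D : Matrix (Fin n) (Fin k) ℝ)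
    (θ : ℝ) (X : Matrix (Fin n) (Fin k) ℝ) : ℝ :=
  (trace (Xᵀ * A * X) + trace (Xᵀ * D)) / trace (Xᵀ * B * X) ^ θ

/-- `g_θ(X) = tr(XᵀAX) / (tr(XᵀBX))^θ`. -/
def gTheta {n k : ℕ} (A B : Matrix (Fin n) (Fin n) ℝ) (θ : ℝ)
    (X : Matrix (Fin n) (Fin k) ℝ) : ℝ :=
  trace (Xᵀ * A * X) / trace (Xᵀ * B * X) ^ θ

/-- The trace norm (sum of singular values) of a real matrix. -/
def traceNorm {m k : ℕ} (M : Matrix (Fin m) (Fin k) ℝ) : ℝ :=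
  ∑ i, Real.sqrt ((Matrix.isHermitian_conjTranspose_mul_self M).eigenvalues i)

/-! ### Auxiliary lemmas -/

section Aux

open Polynomial

variable {k : ℕ}

/-- Characteristic polynomial is invariant under orthogonal conjugation. -/
lemma charpoly_conj_orth (P N : Matrix (Fin k) (Fin k) ℝ) (h1 : P * Pᵀ = 1) :
    (P * N * Pᵀ).charpoly = N.charpoly := by
  have hmap : ∀ (X Y : Matrix (Fin k) (Fin k) ℝ),
      (X * Y).map (C : ℝ →+* ℝ[X]) = X.map C * Y.map C := fun X Y =>
    Matrix.map_mul
  have h1' : P.map (C : ℝ →+* ℝ[X]) * Pᵀ.map C = 1 := by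
    rw [← hmap, h1]; simp
  have hch : charmatrix (P * N * Pᵀ) = P.map C * charmatrix N * Pᵀ.map C := by
    unfold charmatrix
    rw [Matrix.mul_sub, Matrix.sub_mul]
    congr 1
    · rw [(scalar_commute (X : ℝ[X]) (fun r' => Commute.all _ _) (P.map C)).symm.eq,
        mul_assoc, h1', mul_one]
    · show C.mapMatrix (P * N * Pᵀ) = _
      simp only [RingHom.mapMatrix_apply]
      rw [hmap, hmap]
  rw [Matrix.charpoly, hch, det_mul, det_mul, mul_comm (det (P.map C)), mul_assoc, ← det_mul, h1',
    det_one, mul_one]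
  rfl

lemma charpoly_diagonal' (d : Fin k → ℝ) :
    (diagonal d).charpoly = ∏ i, (X - C (d i)) := by
  rw [Matrix.charpoly_of_upperTriangular]
  · simp
  · intro i j hij
    exact diagonal_apply_ne _ (hij.ne')

/-- The diagonalization of `MᵀM` by the eigenvector unitary, over `ℝ`. -/
lemma eig_diag (M : Matrix (Fin k) (Fin k) ℝ) :
    ((Matrix.isHermitian_conjTranspose_mul_self M).eigenvectorUnitary :
        Matrix (Fin k) (Fin k) ℝ)ᵀ * (Mᵀ * M) *
      ((Matrix.isHermitian_conjTranspose_mul_self M).eigenvectorUnitary : Matrix (Fin k) (Fin k) ℝ)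
      = diagonal (Matrix.isHermitian_conjTranspose_mul_self M).eigenvalues := by
  have := Matrix.IsHermitian.conjStarAlgAut_star_eigenvectorUnitary (Matrix.isHermitian_conjTranspose_mul_self M)
  rw [Unitary.conjStarAlgAut_apply] at this
  simpa [Matrix.star_eq_conjTranspose, Matrix.conjTranspose_eq_transpose_of_trivial, Function.comp_def] using this

lemma eigUnit_mul_transpose (M : Matrix (Fin k) (Fin k) ℝ) :
    ((Matrix.isHermitian_conjTranspose_mul_self M).eigenvectorUnitary : Matrix (Fin k) (Fin k) ℝ) *
      ((Matrix.isHermitian_conjTranspose_mul_self M).eigenvectorUnitary :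
        Matrix (Fin k) (Fin k) ℝ)ᵀ = 1 := by
  have := (Matrix.mem_unitaryGroup_iff).mp
    (Matrix.isHermitian_conjTranspose_mul_self M).eigenvectorUnitary.2
  simpa [Matrix.star_eq_conjTranspose, Matrix.conjTranspose_eq_transpose_of_trivial] using this

/-- von Neumann-type inequality: `tr(QᵀM) ≤ ‖M‖_tr` for orthogonal `Q`. -/
lemma trace_orth_mul_le_traceNorm (M Q : Matrix (Fin k) (Fin k) ℝ) (hQ : Qᵀ * Q = 1) :
    trace (Qᵀ * M) ≤ traceNorm M := by
  set h := Matrix.isHermitian_conjTranspose_mul_self M with hh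
  set P : Matrix (Fin k) (Fin k) ℝ := (h.eigenvectorUnitary : Matrix (Fin k) (Fin k) ℝ)
    with hPdef
  have hPP : P * Pᵀ = 1 := eigUnit_mul_transpose M
  have hPP' : Pᵀ * P = 1 := mul_eq_one_comm.mp hPP
  have hdiag : Pᵀ * (Mᵀ * M) * P = diagonal h.eigenvalues := eig_diag M
  -- rewrite the trace
  have htr : trace (Qᵀ * M) = ∑ i, ∑ j, (Q * P) j i * (M * P) j i := by
    have e1 : (Q * P)ᵀ * (M * P) = Pᵀ * (Qᵀ * M) * P := by
      rw [transpose_mul]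
      simp [Matrix.mul_assoc]
    have e2 : trace (Pᵀ * (Qᵀ * M) * P) = trace (Qᵀ * M) := by
      rw [Matrix.trace_mul_cycle, hPP, Matrix.one_mul]
    rw [← e2, ← e1, Matrix.trace]
    refine Finset.sum_congr rfl fun i _ => ?_
    simp [Matrix.mul_apply, Matrix.diag, mul_comm]
  rw [htr, traceNorm]
  refine Finset.sum_le_sum fun i _ => ?_
  have h1 : ∑ j, ((Q * P) j i) ^ 2 = 1 := by
    have e : (Q * P)ᵀ * (Q * P) = 1 := by
      rw [transpose_mul]
      calc Pᵀ * Qᵀ * (Q * P) = Pᵀ * (Qᵀ * Q) * P := by simp [Matrix.mul_assoc]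
      _ = 1 := by rw [hQ, Matrix.mul_one, hPP']
    have := congrFun (congrFun e i) i
    simpa [Matrix.mul_apply, Matrix.one_apply, sq, mul_comm] using this
  have h2 : ∑ j, ((M * P) j i) ^ 2 = h.eigenvalues i := by
    have e : (M * P)ᵀ * (M * P) = diagonal h.eigenvalues := by
      rw [transpose_mul, ← hdiag]
      simp [Matrix.mul_assoc]
    have := congrFun (congrFun e i) i
    simpa [Matrix.mul_apply, Matrix.diagonal_apply_eq, sq, mul_comm] using this
  calc ∑ j, (Q * P) j i * (M * P) j i
      ≤ |∑ j, (Q * P) j i * (M * P) j i| := le_abs_self _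
    _ = Real.sqrt ((∑ j, (Q * P) j i * (M * P) j i) ^ 2) := (Real.sqrt_sq_eq_abs _).symm
    _ ≤ Real.sqrt ((∑ j, ((Q * P) j i) ^ 2) * ∑ j, ((M * P) j i) ^ 2) :=
        Real.sqrt_le_sqrt (Finset.sum_mul_sq_le_sq_mul_sq _ _ _)
    _ = Real.sqrt (h.eigenvalues i) := by rw [h1, h2, one_mul]

/-- The trace norm equals the sum of the singular values from any SVD. -/
lemma traceNorm_eq_of_svd (M U V : Matrix (Fin k) (Fin k) ℝ) (σ : Fin k → ℝ)
    (hU : Uᵀ * U = 1) (hV : Vᵀ * V = 1) (hσ : ∀ i, 0 ≤ σ i)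
    (hM : M = U * diagonal σ * Vᵀ) :
    traceNorm M = ∑ i, σ i := by
  set h := Matrix.isHermitian_conjTranspose_mul_self M with hh
  set P : Matrix (Fin k) (Fin k) ℝ := (h.eigenvectorUnitary : Matrix (Fin k) (Fin k) ℝ)
    with hPdef
  have hPP : P * Pᵀ = 1 := eigUnit_mul_transpose M
  have hPP' : Pᵀ * P = 1 := mul_eq_one_comm.mp hPP
  have hVV : V * Vᵀ = 1 := mul_eq_one_comm.mp hV
  have hMM : Mᵀ * M = V * diagonal (fun i => σ i * σ i) * Vᵀ := by
    rw [hM]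
    calc (U * diagonal σ * Vᵀ)ᵀ * (U * diagonal σ * Vᵀ)
        = V * (diagonal σ)ᵀ * (Uᵀ * U) * (diagonal σ * Vᵀ) := by
          simp [transpose_mul, Matrix.mul_assoc]
      _ = V * diagonal (fun i => σ i * σ i) * Vᵀ := by
          rw [hU, Matrix.mul_one, diagonal_transpose, Matrix.mul_assoc V (diagonal σ),
            ← Matrix.mul_assoc (diagonal σ) (diagonal σ) Vᵀ, diagonal_mul_diagonal,
            ← Matrix.mul_assoc]
  have hMM2 : Mᵀ * M = P * diagonal h.eigenvalues * Pᵀ := by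
    have := eig_diag M
    calc Mᵀ * M = (P * Pᵀ) * (Mᵀ * M) * (P * Pᵀ) := by rw [hPP]; simp
      _ = P * (Pᵀ * (Mᵀ * M) * P) * Pᵀ := by simp [Matrix.mul_assoc]
      _ = P * diagonal h.eigenvalues * Pᵀ := by rw [this]
  -- equal characteristic polynomials
  have hcp : (diagonal h.eigenvalues).charpoly = (diagonal fun i => σ i * σ i).charpoly := by
    rw [← charpoly_conj_orth P _ hPP, ← hMM2, hMM, charpoly_conj_orth V _ hVV]
  rw [charpoly_diagonal', charpoly_diagonal'] at hcp
  -- pass to multisets of roots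
  have hms : Multiset.map h.eigenvalues Finset.univ.val
      = Multiset.map (fun i => σ i * σ i) Finset.univ.val := by
    have r1 := Polynomial.roots_multiset_prod_X_sub_C
      (Multiset.map h.eigenvalues Finset.univ.val)
    have r2 := Polynomial.roots_multiset_prod_X_sub_C
      (Multiset.map (fun i => σ i * σ i) Finset.univ.val)
    rw [← r1, ← r2]
    congr 1
    rw [Multiset.map_map, Multiset.map_map]
    simpa [Finset.prod, Multiset.map_map, Function.comp] using hcp
  have key : ∑ i, Real.sqrt (h.eigenvalues i) = ∑ i, Real.sqrt (σ i * σ i) := by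
    have : (Multiset.map Real.sqrt (Multiset.map h.eigenvalues Finset.univ.val)).sum
        = (Multiset.map Real.sqrt (Multiset.map (fun i => σ i * σ i) Finset.univ.val)).sum := by
      rw [hms]
    simpa [Multiset.map_map, Finset.sum, Function.comp_def] using this
  calc traceNorm M = ∑ i, Real.sqrt (h.eigenvalues i) := rfl
    _ = ∑ i, Real.sqrt (σ i * σ i) := key
    _ = ∑ i, σ i := Finset.sum_congr rfl fun i _ => Real.sqrt_mul_self (hσ i)

end Aux

/-- Theorem 2.5: `max_{Q ∈ 𝕆^{k×k}} f_θ(X̃Q) = g_θ(X̃) + ‖X̃ᵀD‖_tr/(tr(X̃ᵀBX̃))^θ`, attained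
at `Q = UVᵀ` for any SVD `X̃ᵀD = UΣVᵀ`. -/
theorem stmt3 {n k : ℕ} (hk : 1 ≤ k) (hkn : k < n)
    (A B : Matrix (Fin n) (Fin n) ℝ) (hA : A.IsSymm) (hB : B.PosSemidef)
    (hrank : n - k < B.rank)
    (D : Matrix (Fin n) (Fin k) ℝ) (θ : ℝ) (hθ0 : 0 ≤ θ) (hθ1 : θ ≤ 1)
    (Xt : Matrix (Fin n) (Fin k) ℝ) (hXt : Xtᵀ * Xt = 1) :
    (∀ Q : Matrix (Fin k) (Fin k) ℝ, Qᵀ * Q = 1 →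
        fTheta A B D θ (Xt * Q)
          ≤ gTheta A B θ Xt + traceNorm (Xtᵀ * D) / trace (Xtᵀ * B * Xt) ^ θ)
      ∧ (∀ (U V : Matrix (Fin k) (Fin k) ℝ) (σ : Fin k → ℝ),
          Uᵀ * U = 1 → Vᵀ * V = 1 → (∀ i, 0 ≤ σ i) →
          Xtᵀ * D = U * Matrix.diagonal σ * Vᵀ →
          fTheta A B D θ (Xt * (U * Vᵀ))
            = gTheta A B θ Xt + traceNorm (Xtᵀ * D) / trace (Xtᵀ * B * Xt) ^ θ) := by
  -- positivity of the denominator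
  have htpos : 0 < trace (Xtᵀ * B * Xt) := by
    have ent : ∀ i, (Xtᵀ * B * Xt) i i
        = dotProduct (star (fun a => Xt a i)) (B *ᵥ (fun a => Xt a i)) := by
      intro i
      simp only [Matrix.mul_apply, Matrix.mulVec, dotProduct, transpose_apply,
        star_trivial, Finset.sum_mul, Finset.mul_sum]
      rw [Finset.sum_comm]
      exact Finset.sum_congr rfl fun a _ => Finset.sum_congr rfl fun b _ => by ring
    have hnn : ∀ i, 0 ≤ (Xtᵀ * B * Xt) i i := by
      intro i
      rw [ent i]
      exact hB.dotProduct_mulVec_nonneg _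
    rcases (Finset.sum_nonneg (fun i _ => hnn i)).lt_or_eq with hlt | heq
    · exact hlt
    · exfalso
      -- all diagonal entries vanish, hence B * Xt = 0
      have hzero : ∀ i, (Xtᵀ * B * Xt) i i = 0 := by
        intro i
        have := (Finset.sum_eq_zero_iff_of_nonneg (fun i _ => hnn i)).mp heq.symm
        exact this i (Finset.mem_univ i)
      have hBx : ∀ i, B *ᵥ (fun a => Xt a i) = 0 := by
        intro i
        refine (hB.dotProduct_mulVec_zero_iff _).mp ?_
        rw [← ent i]
        exact hzero i
      have hBXt : B * Xt = 0 := by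
        ext a i
        have := congrFun (hBx i) a
        simpa [Matrix.mulVec, dotProduct, Matrix.mul_apply] using this
      -- rank argument
      have hXtrank : Xt.rank = k := by
        have := Matrix.rank_transpose_mul_self Xt
        rw [hXt] at this
        simpa using this.symm
      have hle : LinearMap.range Xt.mulVecLin ≤ LinearMap.ker B.mulVecLin := by
        rintro x ⟨v, rfl⟩
        simp only [LinearMap.mem_ker, Matrix.mulVecLin_apply, Matrix.mulVec_mulVec, hBXt,
          Matrix.zero_mulVec]
      have hk_le : k ≤ Module.finrank ℝ (LinearMap.ker B.mulVecLin) := by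
        rw [← hXtrank]
        exact Submodule.finrank_mono hle
      have hrn := LinearMap.finrank_range_add_finrank_ker B.mulVecLin
      rw [Module.finrank_fintype_fun_eq_card] at hrn
      simp only [Fintype.card_fin] at hrn
      have : B.rank + k ≤ n := by
        have : B.rank = Module.finrank ℝ (LinearMap.range B.mulVecLin) := rfl
        omega
      omega
  have htθ : 0 < trace (Xtᵀ * B * Xt) ^ θ := Real.rpow_pos_of_pos htpos θ
  -- invariance of the two quadratic traces
  have hinv : ∀ Q : Matrix (Fin k) (Fin k) ℝ, Qᵀ * Q = 1 →
      ∀ C : Matrix (Fin n) (Fin n) ℝ,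
      trace ((Xt * Q)ᵀ * C * (Xt * Q)) = trace (Xtᵀ * C * Xt) := by
    intro Q hQ C
    have hQQ : Q * Qᵀ = 1 := mul_eq_one_comm.mp hQ
    have e : (Xt * Q)ᵀ * C * (Xt * Q) = Qᵀ * (Xtᵀ * C * Xt) * Q := by
      rw [transpose_mul]
      simp [Matrix.mul_assoc]
    rw [e, Matrix.trace_mul_cycle, ← Matrix.mul_assoc, hQQ, Matrix.one_mul]
  have hD : ∀ Q : Matrix (Fin k) (Fin k) ℝ,
      trace ((Xt * Q)ᵀ * D) = trace (Qᵀ * (Xtᵀ * D)) := by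
    intro Q
    rw [transpose_mul]
    simp [Matrix.mul_assoc]
  constructor
  · intro Q hQ
    rw [fTheta, gTheta, hinv Q hQ A, hinv Q hQ B, hD Q, ← add_div]
    have hvn := trace_orth_mul_le_traceNorm (Xtᵀ * D) Q hQ
    exact (div_le_div_iff_of_pos_right htθ).mpr (add_le_add_right hvn _)
  · intro U V σ hU hV hσ hsvd
    have hQ : (U * Vᵀ)ᵀ * (U * Vᵀ) = 1 := by
      rw [transpose_mul, transpose_transpose]
      calc Vᵀᵀ * Uᵀ * (U * Vᵀ) = V * (Uᵀ * U) * Vᵀ := by simp [Matrix.mul_assoc]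
        _ = 1 := by rw [hU, Matrix.mul_one, mul_eq_one_comm.mp hV]
    have htrQ : trace ((U * Vᵀ)ᵀ * (Xtᵀ * D)) = ∑ i, σ i := by
      rw [hsvd, transpose_mul, transpose_transpose]
      calc trace (Vᵀᵀ * Uᵀ * (U * diagonal σ * Vᵀ))
          = trace (V * (Uᵀ * U) * diagonal σ * Vᵀ) := by
            congr 1
            simp [Matrix.mul_assoc]
        _ = trace (V * diagonal σ * Vᵀ) := by rw [hU, Matrix.mul_one]
        _ = trace (Vᵀ * V * diagonal σ) := by
            rw [Matrix.trace_mul_cycle]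
        _ = trace (diagonal σ) := by rw [hV, Matrix.one_mul]
        _ = ∑ i, σ i := by simp [Matrix.trace, Matrix.diag]
    have hTN : traceNorm (Xtᵀ * D) = ∑ i, σ i :=
      traceNorm_eq_of_svd _ U V σ hU hV hσ hsvd
    rw [fTheta, gTheta, hinv _ hQ A, hinv _ hQ B, hD _, htrQ, hTN, ← add_div]

end
end

section
/- Let S ∈ ℝ^{k×k} with singular value decomposition S = UΣVᵀ, where U, V ∈ 𝕆^{k×k} and Σ = diag(σ₁, …, σ_k) with σ₁ ≥ ⋯ ≥ σ_k ≥ 0, and let r = rank(S) (so σ_r > 0 = σ_{r+1} = ⋯ = σ_k when r < k). Then Q ∈ 𝕆^{k×k} is a maximizer of tr(QᵀS) over 𝕆^{k×k} if and only if Q = U_{(:,1:r)} V_{(:,1:r)}ᵀ + U_{(:,r+1:k)} W V_{(:,r+1:k)}ᵀ for some W ∈ 𝕆^{(k−r)×(k−r)} (the second term being absent when r = k), and the maximal value is σ₁ + ⋯ + σ_k = ‖S‖_tr. -/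
open Matrix Polynomial

noncomputable section

/-- Columns `1:r` of a `k×k` matrix. -/
def colsFirst {k : ℕ} (M : Matrix (Fin k) (Fin k) ℝ) (r : ℕ) (h : r ≤ k) :
    Matrix (Fin k) (Fin r) ℝ :=
  M.submatrix id fun i => Fin.castLE h i

/-- Columns `r+1:k` of a `k×k` matrix. -/
def colsLast {k : ℕ} (M : Matrix (Fin k) (Fin k) ℝ) (r : ℕ) (h : r ≤ k) :
    Matrix (Fin k) (Fin (k - r)) ℝ :=
  M.submatrix id fun i : Fin (k - r) => ⟨r + i.1, by omega⟩

/- ## Auxiliary lemmas -/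

lemma my_charpoly_conj {k : ℕ} (P A Pi : Matrix (Fin k) (Fin k) ℝ)
    (h1 : P * Pi = 1) : (P * A * Pi).charpoly = A.charpoly := by
  have key : charmatrix (P * A * Pi) = (P.map C) * charmatrix A * (Pi.map C) := by
    rw [charmatrix, charmatrix]
    rw [Matrix.mul_sub, Matrix.sub_mul]
    congr 1
    · have hc : Commute (Matrix.scalar (Fin k) (X : ℝ[X])) (Pi.map C) :=
        Matrix.scalar_commute _ (fun r' => Commute.all _ _) _
      rw [Matrix.mul_assoc, hc.eq, ← Matrix.mul_assoc, ← Matrix.map_mul, h1]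
      simp
    · simp only [RingHom.mapMatrix_apply]
      rw [← Matrix.map_mul, ← Matrix.map_mul]
  unfold Matrix.charpoly
  rw [key, Matrix.det_mul, Matrix.det_mul]
  have : P.map C * Pi.map C = 1 := by rw [← Matrix.map_mul, h1]; simp
  have hdet : (P.map C).det * (Pi.map C).det = 1 := by
    rw [← Matrix.det_mul, this, Matrix.det_one]
  calc (P.map C).det * (charmatrix A).det * (Pi.map C).det
      = (charmatrix A).det * ((P.map C).det * (Pi.map C).det) := by ring
    _ = (charmatrix A).det := by rw [hdet, mul_one]

lemma my_charpoly_diagonal {k : ℕ} (d : Fin k → ℝ) :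
    (Matrix.diagonal d).charpoly = ∏ i, (X - C (d i)) := by
  unfold Matrix.charpoly
  have : charmatrix (Matrix.diagonal d) = Matrix.diagonal (fun i => (X : ℝ[X]) - C (d i)) := by
    ext i j
    by_cases h : i = j
    · subst h; rw [charmatrix_apply_eq, Matrix.diagonal_apply_eq, Matrix.diagonal_apply_eq]
    · rw [charmatrix_apply_ne _ _ _ h, Matrix.diagonal_apply_ne _ h, Matrix.diagonal_apply_ne _ h]
      simp
  rw [this, Matrix.det_diagonal]

lemma my_eig_sum {k : ℕ} (μ ν : Fin k → ℝ)
    (h : ∏ i, (X - C (μ i)) = ∏ i, (X - C (ν i))) (g : ℝ → ℝ) :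
    ∑ i, g (μ i) = ∑ i, g (ν i) := by
  have hmul : (Finset.univ.val.map μ) = (Finset.univ.val.map ν) := by
    have h1 : ((Finset.univ.val.map μ).map (fun a => X - C a)).prod
        = ((Finset.univ.val.map ν).map (fun a => X - C a)).prod := by
      rw [Multiset.map_map, Multiset.map_map]
      exact h
    have := congrArg Polynomial.roots h1
    rwa [roots_multiset_prod_X_sub_C, roots_multiset_prod_X_sub_C] at this
  calc ∑ i, g (μ i) = ((Finset.univ.val.map μ).map g).sum := by
        rw [Multiset.map_map]; rfl
    _ = ((Finset.univ.val.map ν).map g).sum := by rw [hmul]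
    _ = ∑ i, g (ν i) := by rw [Multiset.map_map]; rfl

lemma my_traceNorm {k : ℕ} (S U V : Matrix (Fin k) (Fin k) ℝ)
    (hU : Uᵀ * U = 1) (hV : Vᵀ * V = 1) (σ : Fin k → ℝ) (hσpos : ∀ i, 0 ≤ σ i)
    (hSVD : S = U * Matrix.diagonal σ * Vᵀ) : ∑ i, σ i = traceNorm S := by
  have hA := Matrix.isHermitian_conjTranspose_mul_self S
  set P : Matrix (Fin k) (Fin k) ℝ := (hA.eigenvectorUnitary : Matrix (Fin k) (Fin k) ℝ) with hP
  have hPP : P * star P = 1 := (Matrix.mem_unitaryGroup_iff).mp (hA.eigenvectorUnitary).2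
  have hspec : Sᵀ * S = P * Matrix.diagonal hA.eigenvalues * star P := by
    have := hA.spectral_theorem
    convert this using 3
    · exact (Matrix.conjTranspose_eq_transpose_of_trivial S).symm
    · rw [Unitary.conjStarAlgAut_apply]; rfl
  have hVV : V * Vᵀ = 1 := mul_eq_one_comm.mp hV
  have hSS : Sᵀ * S = V * Matrix.diagonal (fun i => σ i * σ i) * Vᵀ := by
    rw [hSVD]
    rw [Matrix.transpose_mul, Matrix.transpose_mul, Matrix.transpose_transpose,
      Matrix.diagonal_transpose]
    calc Vᵀᵀ * (Matrix.diagonal σ * Uᵀ) * (U * Matrix.diagonal σ * Vᵀ)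
        = V * (Matrix.diagonal σ * ((Uᵀ * U) * Matrix.diagonal σ) * Vᵀ) := by
          rw [Matrix.transpose_transpose]; noncomm_ring
      _ = V * Matrix.diagonal (fun i => σ i * σ i) * Vᵀ := by
          rw [hU, Matrix.one_mul, Matrix.diagonal_mul_diagonal]; noncomm_ring
  have hc1 : (Sᵀ * S).charpoly = ∏ i, (X - C (hA.eigenvalues i)) := by
    rw [hspec, my_charpoly_conj _ _ _ hPP, my_charpoly_diagonal]
  have hc2 : (Sᵀ * S).charpoly = ∏ i, (X - C (σ i * σ i)) := by
    rw [hSS, my_charpoly_conj _ _ _ hVV, my_charpoly_diagonal]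
  have := my_eig_sum _ _ (hc2.symm.trans hc1) Real.sqrt
  unfold traceNorm
  rw [← this]
  exact Finset.sum_congr rfl fun i _ => (Real.sqrt_mul_self (hσpos i)).symm

def matE (k r : ℕ) (hrk : r ≤ k) : Matrix (Fin k) (Fin r) ℝ :=
  Matrix.of fun i c => if i = Fin.castLE hrk c then 1 else 0

def matF (k r : ℕ) (hrk : r ≤ k) : Matrix (Fin k) (Fin (k - r)) ℝ :=
  Matrix.of fun i p => if i = (⟨r + p.1, by omega⟩ : Fin k) then 1 else 0

section EF

variable {k r : ℕ} (hrk : r ≤ k)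

lemma sum_split (h : Fin k → ℝ) :
    ∑ i, h i = (∑ c : Fin r, h (Fin.castLE hrk c))
      + ∑ p : Fin (k - r), h ⟨r + p.1, by omega⟩ := by
  have hk : r + (k - r) = k := by omega
  have := Fintype.sum_equiv (finSumFinEquiv.trans (finCongr hk))
    (fun x => h ((finSumFinEquiv.trans (finCongr hk)) x)) h (fun x => rfl)
  rw [← this, Fintype.sum_sum_type]
  congr 1 <;> refine Finset.sum_congr rfl fun x _ => ?_ <;> congr 1 <;> apply Fin.ext <;> simp

lemma mul_matE {n : Type*} [Fintype n] (M : Matrix n (Fin k) ℝ) :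
    M * matE k r hrk = M.submatrix id (fun c => Fin.castLE hrk c) := by
  ext i c
  simp [Matrix.mul_apply, matE, mul_ite, Finset.sum_ite_eq']

lemma mul_matF {n : Type*} [Fintype n] (M : Matrix n (Fin k) ℝ) :
    M * matF k r hrk = M.submatrix id (fun p : Fin (k - r) => (⟨r + p.1, by omega⟩ : Fin k)) := by
  ext i p
  simp [Matrix.mul_apply, matF, mul_ite, Finset.sum_ite_eq']

lemma matE_mul {n : Type*} [Fintype n] (M : Matrix (Fin k) n ℝ) :
    (matE k r hrk)ᵀ * M = M.submatrix (fun c => Fin.castLE hrk c) id := by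
  ext c j
  simp [Matrix.mul_apply, matE, ite_mul, Finset.sum_ite_eq]

lemma matF_mul {n : Type*} [Fintype n] (M : Matrix (Fin k) n ℝ) :
    (matF k r hrk)ᵀ * M
      = M.submatrix (fun p : Fin (k - r) => (⟨r + p.1, by omega⟩ : Fin k)) id := by
  ext p j
  simp [Matrix.mul_apply, matF, ite_mul, Finset.sum_ite_eq]

lemma colsFirst_eq (M : Matrix (Fin k) (Fin k) ℝ) :
    colsFirst M r hrk = M * matE k r hrk := by rw [mul_matE]; rfl

lemma colsLast_eq (M : Matrix (Fin k) (Fin k) ℝ) :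
    colsLast M r hrk = M * matF k r hrk := by rw [mul_matF]; rfl

lemma matF_orth : (matF k r hrk)ᵀ * matF k r hrk = 1 := by
  rw [matF_mul]
  ext p p'
  by_cases h : p = p'
  · subst h; simp [matF, Matrix.one_apply]
  · have : (⟨r + p.1, by omega⟩ : Fin k) ≠ ⟨r + p'.1, by omega⟩ := by
      simp only [ne_eq, Fin.mk.injEq]
      intro hc; exact h (Fin.ext (by omega))
    simp [matF, Matrix.one_apply, this, h]

lemma matEF_one :
    matE k r hrk * (matE k r hrk)ᵀ + matF k r hrk * (matF k r hrk)ᵀ = 1 := by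
  ext i j
  have hsum := sum_split hrk (fun l => (if i = l then (1:ℝ) else 0) * (if j = l then 1 else 0))
  have hl : ∑ l : Fin k, (if i = l then (1:ℝ) else 0) * (if j = l then 1 else 0)
      = (1 : Matrix (Fin k) (Fin k) ℝ) i j := by
    simp [ite_mul, Finset.sum_ite_eq', Matrix.one_apply, eq_comm]
  rw [Matrix.add_apply, Matrix.mul_apply, Matrix.mul_apply, ← hl, hsum]
  congr 1 <;> exact Finset.sum_congr rfl fun x _ => by simp [matE, matF]

lemma matF_row_zero {m : Type*} [Fintype m] (N : Matrix (Fin (k - r)) m ℝ)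
    (i : Fin k) (hi : (i : ℕ) < r) (j : m) : (matF k r hrk * N) i j = 0 := by
  rw [Matrix.mul_apply]
  apply Finset.sum_eq_zero
  intro p _
  have : i ≠ (⟨r + p.1, by omega⟩ : Fin k) := by
    simp only [ne_eq, Fin.ext_iff]; omega
  simp [matF, this]

end EF

/- ## Main theorem -/

/-- Lemma 3.3: characterization of the maximizers of `tr(QᵀS)` over the orthogonal group. -/
theorem stmt9 {k : ℕ} (S : Matrix (Fin k) (Fin k) ℝ)
    (U V : Matrix (Fin k) (Fin k) ℝ) (hU : Uᵀ * U = 1) (hV : Vᵀ * V = 1)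
    (σ : Fin k → ℝ) (hσmono : Antitone σ) (hσpos : ∀ i, 0 ≤ σ i)
    (hSVD : S = U * Matrix.diagonal σ * Vᵀ)
    (r : ℕ) (hr : r = S.rank) (hrk : r ≤ k)
    (hσr : ∀ i : Fin k, 0 < σ i ↔ (i : ℕ) < r) :
    (∀ Q : Matrix (Fin k) (Fin k) ℝ, Qᵀ * Q = 1 → trace (Qᵀ * S) ≤ ∑ i, σ i)
      ∧ (∀ Q : Matrix (Fin k) (Fin k) ℝ, Qᵀ * Q = 1 →
          (trace (Qᵀ * S) = ∑ i, σ i ↔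
            ∃ W : Matrix (Fin (k - r)) (Fin (k - r)) ℝ, Wᵀ * W = 1 ∧
              Q = colsFirst U r hrk * (colsFirst V r hrk)ᵀ
                    + colsLast U r hrk * W * (colsLast V r hrk)ᵀ))
      ∧ (∃ Q : Matrix (Fin k) (Fin k) ℝ, Qᵀ * Q = 1 ∧ trace (Qᵀ * S) = ∑ i, σ i)
      ∧ ∑ i, σ i = traceNorm S := by
  have hUU : U * Uᵀ = 1 := mul_eq_one_comm.mp hU
  have hVV : V * Vᵀ = 1 := mul_eq_one_comm.mp hV
  have hσ0 : ∀ i : Fin k, r ≤ (i : ℕ) → σ i = 0 := by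
    intro i hi
    refine le_antisymm ?_ (hσpos i)
    by_contra h
    push_neg at h
    exact absurd ((hσr i).mp h) (by omega)
  -- trace formula
  have traceEq : ∀ Q : Matrix (Fin k) (Fin k) ℝ,
      trace (Qᵀ * S) = ∑ i, σ i * ((Uᵀ * Q * V) i i) := by
    intro Q
    rw [hSVD]
    have h1 : Qᵀ * (U * Matrix.diagonal σ * Vᵀ) = (Qᵀ * U * Matrix.diagonal σ) * Vᵀ := by
      noncomm_ring
    rw [h1, Matrix.trace_mul_comm]
    have h2 : Vᵀ * (Qᵀ * U * Matrix.diagonal σ) = (Vᵀ * (Qᵀ * U)) * Matrix.diagonal σ := by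
      noncomm_ring
    rw [h2, Matrix.trace]
    refine Finset.sum_congr rfl fun i _ => ?_
    have h3 : Vᵀ * (Qᵀ * U) = (Uᵀ * Q * V)ᵀ := by
      rw [Matrix.transpose_mul, Matrix.transpose_mul, Matrix.transpose_transpose]
    rw [Matrix.diag_apply, Matrix.mul_diagonal, h3, Matrix.transpose_apply]
    ring
  -- orthogonality of M = Uᵀ Q V
  have hMorth : ∀ Q : Matrix (Fin k) (Fin k) ℝ, Qᵀ * Q = 1 →
      (Uᵀ * Q * V)ᵀ * (Uᵀ * Q * V) = 1 := by
    intro Q hQ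
    have h1 : (Uᵀ * Q * V)ᵀ * (Uᵀ * Q * V) = Vᵀ * ((Qᵀ * ((U * Uᵀ) * Q)) * V) := by
      rw [Matrix.transpose_mul, Matrix.transpose_mul, Matrix.transpose_transpose]
      noncomm_ring
    rw [h1, hUU, Matrix.one_mul, ← Matrix.mul_assoc, ← Matrix.mul_assoc,
      Matrix.mul_assoc Vᵀ Qᵀ Q, hQ, Matrix.mul_one, hV]
  -- diagonal entries of orthogonal matrices are at most 1
  have hdiag_le : ∀ M : Matrix (Fin k) (Fin k) ℝ, Mᵀ * M = 1 → ∀ i, M i i ≤ 1 := by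
    intro M hM i
    have h := congrFun (congrFun hM i) i
    simp only [Matrix.mul_apply, Matrix.transpose_apply, Matrix.one_apply_eq] at h
    have h2 : M i i * M i i ≤ ∑ j, M j i * M j i :=
      Finset.single_le_sum (fun j _ => mul_self_nonneg (M j i)) (Finset.mem_univ i)
    nlinarith
  -- if a diagonal entry is 1, the rest of the column vanishes
  have hcol : ∀ M : Matrix (Fin k) (Fin k) ℝ, Mᵀ * M = 1 → ∀ j, M j j = 1 →
      ∀ i, i ≠ j → M i j = 0 := by
    intro M hM j hdj i hij
    have h := congrFun (congrFun hM j) j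
    simp only [Matrix.mul_apply, Matrix.transpose_apply, Matrix.one_apply_eq] at h
    have hsplit : ∑ l, M l j * M l j
        = M j j * M j j + ∑ l ∈ Finset.univ.erase j, M l j * M l j :=
      (Finset.add_sum_erase _ _ (Finset.mem_univ j)).symm
    have hrest : ∑ l ∈ Finset.univ.erase j, M l j * M l j = 0 := by
      rw [hsplit, hdj] at h; linarith
    have := (Finset.sum_eq_zero_iff_of_nonneg (fun l _ => mul_self_nonneg (M l j))).mp hrest i
      (Finset.mem_erase.mpr ⟨hij, Finset.mem_univ i⟩)
    exact mul_self_eq_zero.mp this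
  -- Part 1 : the bound
  have part1 : ∀ Q : Matrix (Fin k) (Fin k) ℝ, Qᵀ * Q = 1 → trace (Qᵀ * S) ≤ ∑ i, σ i := by
    intro Q hQ
    rw [traceEq Q]
    refine Finset.sum_le_sum fun i _ => ?_
    calc σ i * (Uᵀ * Q * V) i i ≤ σ i * 1 :=
          mul_le_mul_of_nonneg_left (hdiag_le _ (hMorth Q hQ) i) (hσpos i)
      _ = σ i := mul_one _
  refine ⟨part1, ?_, ?_, my_traceNorm S U V hU hV σ hσpos hSVD⟩
  · -- Part 2 : characterization of maximizers
    intro Q hQ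
    constructor
    · -- forward direction
      intro htr
      set M : Matrix (Fin k) (Fin k) ℝ := Uᵀ * Q * V with hMdef
      have hMo : Mᵀ * M = 1 := hMorth Q hQ
      have hMMo : M * Mᵀ = 1 := mul_eq_one_comm.mp hMo
      have hdiag1 : ∀ i : Fin k, (i : ℕ) < r → M i i = 1 := by
        have hterm : ∀ i ∈ Finset.univ, (0:ℝ) ≤ σ i * (1 - M i i) := by
          intro i _
          have := hdiag_le M hMo i
          have := hσpos i
          nlinarith
        have hzero : ∑ i, σ i * (1 - M i i) = 0 := by
          have h1 : ∑ i, σ i * (1 - M i i) = (∑ i, σ i) - ∑ i, σ i * M i i := by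
            rw [← Finset.sum_sub_distrib]
            exact Finset.sum_congr rfl fun i _ => by ring
          rw [h1, ← traceEq Q, htr, sub_self]
        have hz := (Finset.sum_eq_zero_iff_of_nonneg hterm).mp hzero
        intro i hi
        have hpos : 0 < σ i := (hσr i).mpr hi
        have := hz i (Finset.mem_univ i)
        rcases mul_eq_zero.mp this with h | h
        · exact absurd h (ne_of_gt hpos)
        · linarith
      have hMzero_col : ∀ i j : Fin k, (j : ℕ) < r → i ≠ j → M i j = 0 :=
        fun i j hj hij => hcol M hMo j (hdiag1 j hj) i hij
      have hMzero_row : ∀ i j : Fin k, (i : ℕ) < r → i ≠ j → M i j = 0 := by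
        intro i j hi hij
        have h := hcol Mᵀ (by rw [Matrix.transpose_transpose]; exact hMMo) i
          (hdiag1 i hi) j (Ne.symm hij)
        simpa using h
      set E : Matrix (Fin k) (Fin r) ℝ := matE k r hrk with hE
      set F : Matrix (Fin k) (Fin (k - r)) ℝ := matF k r hrk with hF
      have hEME : Eᵀ * M * E = 1 := by
        rw [hE, Matrix.mul_assoc, mul_matE hrk M, matE_mul hrk]
        ext c c'
        by_cases h : c = c'
        · subst h
          simp only [Matrix.submatrix_apply, id_eq, Matrix.one_apply_eq]
          exact hdiag1 _ (by simp)
        · have hne : (Fin.castLE hrk c : Fin k) ≠ Fin.castLE hrk c' := by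
            simpa [Fin.castLE_inj] using h
          simp only [Matrix.submatrix_apply, id_eq, Matrix.one_apply_ne h]
          exact hMzero_row _ _ (by simp) hne
      have hEMF : Eᵀ * M * F = 0 := by
        rw [hE, hF, Matrix.mul_assoc, mul_matF hrk M, matE_mul hrk]
        ext c p
        simp only [Matrix.submatrix_apply, id_eq, Matrix.zero_apply]
        refine hMzero_row _ _ (by simp) ?_
        simp only [ne_eq, Fin.ext_iff, Fin.coe_castLE]
        have := c.2; omega
      have hFME : Fᵀ * M * E = 0 := by
        rw [hE, hF, Matrix.mul_assoc, mul_matE hrk M, matF_mul hrk]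
        ext p c
        simp only [Matrix.submatrix_apply, id_eq, Matrix.zero_apply]
        refine hMzero_col _ _ (by simp) ?_
        simp only [ne_eq, Fin.ext_iff, Fin.coe_castLE]
        have := c.2; omega
      set W : Matrix (Fin (k - r)) (Fin (k - r)) ℝ := Fᵀ * M * F with hW
      have hMblock : M = E * Eᵀ + F * W * Fᵀ := by
        calc M = 1 * M * 1 := by rw [Matrix.one_mul, Matrix.mul_one]
          _ = (E * Eᵀ + F * Fᵀ) * M * (E * Eᵀ + F * Fᵀ) := by rw [matEF_one hrk]
          _ = E * (Eᵀ * M * E) * Eᵀ + E * (Eᵀ * M * F) * Fᵀ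
              + F * (Fᵀ * M * E) * Eᵀ + F * (Fᵀ * M * F) * Fᵀ := by
              simp only [Matrix.mul_add, Matrix.add_mul, Matrix.mul_assoc]
              abel
          _ = E * Eᵀ + F * W * Fᵀ := by
              rw [hEME, hEMF, hFME, ← hW]
              simp [Matrix.mul_one, Matrix.mul_zero, Matrix.zero_mul]
      have hFt : Fᵀ * Mᵀ * E = 0 := by
        have h := congrArg Matrix.transpose hEMF
        rw [Matrix.transpose_mul, Matrix.transpose_mul, Matrix.transpose_transpose,
          Matrix.transpose_zero, ← Matrix.mul_assoc] at h
        exact h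
      have hFF1 : F * Fᵀ = 1 - E * Eᵀ := by
        rw [← matEF_one hrk]; noncomm_ring
      have hWo : Wᵀ * W = 1 := by
        calc Wᵀ * W = (Fᵀ * Mᵀ * F) * (Fᵀ * M * F) := by
              rw [hW, Matrix.transpose_mul, Matrix.transpose_mul, Matrix.transpose_transpose]
              simp only [Matrix.mul_assoc]
          _ = Fᵀ * Mᵀ * (F * Fᵀ) * M * F := by simp only [Matrix.mul_assoc]
          _ = Fᵀ * Mᵀ * (1 - E * Eᵀ) * M * F := by rw [hFF1]
          _ = Fᵀ * (Mᵀ * M) * F - (Fᵀ * Mᵀ * E) * (Eᵀ * M * F) := by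
              simp only [Matrix.mul_sub, Matrix.sub_mul, Matrix.mul_one, Matrix.one_mul,
                Matrix.mul_assoc]
          _ = 1 := by
              rw [hMo, hFt, hEMF, Matrix.mul_one, Matrix.zero_mul, sub_zero, matF_orth hrk]
      refine ⟨W, hWo, ?_⟩
      have hQM : Q = U * M * Vᵀ := by
        have h1 : U * (Uᵀ * Q * V) * Vᵀ = (U * Uᵀ) * Q * (V * Vᵀ) := by noncomm_ring
        rw [hMdef, h1, hUU, hVV, Matrix.one_mul, Matrix.mul_one]
      rw [hQM, hMblock, colsFirst_eq hrk U, colsFirst_eq hrk V,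
        colsLast_eq hrk U, colsLast_eq hrk V, Matrix.transpose_mul, Matrix.transpose_mul]
      rw [← hE, ← hF]
      simp only [Matrix.mul_add, Matrix.add_mul, Matrix.mul_assoc]
    · -- converse direction
      rintro ⟨W, -, hQform⟩
      rw [traceEq Q]
      set E : Matrix (Fin k) (Fin r) ℝ := matE k r hrk with hE
      set F : Matrix (Fin k) (Fin (k - r)) ℝ := matF k r hrk with hF
      have hQM : Uᵀ * Q * V = E * Eᵀ + F * W * Fᵀ := by
        rw [hQform, colsFirst_eq hrk U, colsFirst_eq hrk V,
          colsLast_eq hrk U, colsLast_eq hrk V]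
        have expand : Uᵀ * ((U * matE k r hrk) * (V * matE k r hrk)ᵀ
              + (U * matF k r hrk) * W * (V * matF k r hrk)ᵀ) * V
            = (Uᵀ * U) * (matE k r hrk * ((matE k r hrk)ᵀ * (Vᵀ * V)))
              + (Uᵀ * U) * (matF k r hrk * (W * ((matF k r hrk)ᵀ * (Vᵀ * V)))) := by
          rw [Matrix.transpose_mul, Matrix.transpose_mul]
          simp only [Matrix.mul_add, Matrix.add_mul, Matrix.mul_assoc]
        rw [expand, hU, hV, ← hE, ← hF]
        simp only [Matrix.one_mul, Matrix.mul_one, Matrix.mul_assoc]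
      rw [hQM]
      refine Finset.sum_congr rfl fun i _ => ?_
      by_cases hi : (i : ℕ) < r
      · have hFW : (F * (W * Fᵀ)) i i = 0 := matF_row_zero hrk _ i hi i
        have hFF : (F * Fᵀ) i i = 0 := matF_row_zero hrk Fᵀ i hi i
        have hEE : (E * Eᵀ) i i = 1 := by
          have h := congrFun (congrFun (matEF_one hrk) i) i
          simp only [Matrix.add_apply, Matrix.one_apply_eq, ← hE, ← hF] at h
          rw [hFF] at h
          linarith
        have hFW' : (F * W * Fᵀ) i i = 0 := by rw [Matrix.mul_assoc]; exact hFW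
        rw [Matrix.add_apply, hEE, hFW']
        ring
      · rw [hσ0 i (by omega)]
        ring
  · -- Part 3 : existence of a maximizer
    refine ⟨U * Vᵀ, ?_, ?_⟩
    · have h1 : (U * Vᵀ)ᵀ * (U * Vᵀ) = V * ((Uᵀ * U) * Vᵀ) := by
        rw [Matrix.transpose_mul, Matrix.transpose_transpose]
        noncomm_ring
      rw [h1, hU, Matrix.one_mul, hVV]
    · rw [traceEq]
      have hM1 : Uᵀ * (U * Vᵀ) * V = 1 := by
        have h1 : Uᵀ * (U * Vᵀ) * V = (Uᵀ * U) * (Vᵀ * V) := by noncomm_ring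
        rw [h1, hU, hV, Matrix.one_mul]
      rw [hM1]
      simp

end
end

section
/- Given X_* ∈ 𝕆^{n×k}, let X_*ᵀD = UΣVᵀ be a singular value decomposition with U, V ∈ 𝕆^{k×k} and Σ = diag(σ₁, …, σ_k), σ₁ ≥ ⋯ ≥ σ_k ≥ 0, and let r = rank(X_*ᵀD). Then every maximizer Q_opt of the problem max_{Q ∈ 𝕆^{k×k}} f_θ(X_*Q) satisfies X_*Q_opt = X_* U_{(:,1:r)} V_{(:,1:r)}ᵀ + X_* U_{(:,r+1:k)} W V_{(:,r+1:k)}ᵀ for some W ∈ 𝕆^{(k−r)×(k−r)}, where the first term has rank r and the second term has rank k − r. Moreover, [X_*Q_opt]ᵀ D = VΣVᵀ is symmetric positive semidefinite and tr([X_*Q_opt]ᵀD) = ‖X_*ᵀD‖_tr. -/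
open Matrix

noncomputable section

/-! ### Auxiliary lemmas -/

theorem aux_sum_split {M : Type*} [AddCommMonoid M] {k r : ℕ} (hrk : r ≤ k) (g : Fin k → M) :
    ∑ j, g j = (∑ a : Fin r, g (Fin.castLE hrk a)) +
      ∑ b : Fin (k - r), g ⟨r + b.1, by omega⟩ := by
  set f : ℕ → M := fun j => if h : j < k then g ⟨j, h⟩ else 0 with hf
  have h1 : ∑ j, g j = ∑ j ∈ Finset.range k, f j := by
    rw [← Fin.sum_univ_eq_sum_range (fun j => f j) k]
    apply Finset.sum_congr rfl
    intro x _; simp [hf, x.2]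
  rw [h1, Finset.range_eq_Ico, ← Finset.sum_Ico_consecutive _ (Nat.zero_le r) hrk,
    ← Finset.range_eq_Ico, Finset.sum_Ico_eq_sum_range]
  congr 1
  · rw [← Fin.sum_univ_eq_sum_range (fun j => f j) r]
    apply Finset.sum_congr rfl
    intro x _
    have : (x : ℕ) < k := lt_of_lt_of_le x.2 hrk
    simp only [hf, this, dif_pos]
    rfl
  · rw [← Fin.sum_univ_eq_sum_range (fun j => f (r + j)) (k - r)]
    apply Finset.sum_congr rfl
    intro x _
    have : r + (x : ℕ) < k := by omega
    simp only [hf, this, dif_pos]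

lemma aux_trace_tms_nonneg {m k : ℕ} (M : Matrix (Fin m) (Fin k) ℝ) : 0 ≤ trace (Mᵀ * M) := by
  have : trace (Mᵀ * M) = ∑ j, ∑ i, (M i j)^2 := by
    simp [trace, Matrix.mul_apply, sq]
  rw [this]; positivity

lemma aux_trace_tms_eq_zero {m k : ℕ} (M : Matrix (Fin m) (Fin k) ℝ)
    (h : trace (Mᵀ * M) = 0) : M = 0 := by
  have h2 : trace (Mᵀ * M) = ∑ j, ∑ i, (M i j)^2 := by
    simp [trace, Matrix.mul_apply, sq]
  rw [h2] at h
  ext i j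
  have := (Finset.sum_eq_zero_iff_of_nonneg
    (fun j _ => Finset.sum_nonneg fun i _ => sq_nonneg (M i j))).mp h j (Finset.mem_univ j)
  have := (Finset.sum_eq_zero_iff_of_nonneg (fun i _ => sq_nonneg (M i j))).mp this i
    (Finset.mem_univ i)
  simpa [sq] using this

open scoped MatrixOrder in
lemma aux_cB_pos {n k : ℕ} (B : Matrix (Fin n) (Fin n) ℝ) (hB : B.PosSemidef)
    (hrank : n - k < B.rank) (hkn : k < n)
    (Xs : Matrix (Fin n) (Fin k) ℝ) (hXs : Xsᵀ * Xs = 1) :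
    0 < trace (Xsᵀ * B * Xs) := by
  have hC : (CFC.sqrt B).PosSemidef := (CFC.sqrt_nonneg B).posSemidef
  have hCC : CFC.sqrt B * CFC.sqrt B = B := CFC.sqrt_mul_sqrt_self B hB.nonneg
  have hCs : (CFC.sqrt B)ᵀ = CFC.sqrt B := by
    have := hC.isHermitian
    rwa [IsHermitian, conjTranspose_eq_transpose_of_trivial] at this
  set C := CFC.sqrt B with hCdef
  have key : Xsᵀ * B * Xs = (C * Xs)ᵀ * (C * Xs) := by
    rw [transpose_mul, hCs]
    rw [← hCC, Matrix.mul_assoc, Matrix.mul_assoc, Matrix.mul_assoc]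
  rcases lt_or_eq_of_le (key ▸ aux_trace_tms_nonneg (C * Xs)) with h | h
  · exact h
  · exfalso
    have hCXs : C * Xs = 0 := aux_trace_tms_eq_zero _ (by rw [← key, ← h])
    have hBXs : B * Xs = 0 := by
      rw [← hCC, Matrix.mul_assoc, hCXs, Matrix.mul_zero]
    have hrXs : Xs.rank = k := by
      have h1 : (Xsᵀ * Xs).rank = Xs.rank := Matrix.rank_transpose_mul_self Xs
      rw [hXs, Matrix.rank_one] at h1
      simpa using h1.symm
    have := Matrix.rank_add_rank_le_card_of_mul_eq_zero hBXs
    rw [hrXs, Fintype.card_fin] at this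
    omega

open scoped MatrixOrder in
lemma aux_trace_sqrt {k : ℕ} {H : Matrix (Fin k) (Fin k) ℝ} (hH : H.PosSemidef) :
    trace (CFC.sqrt H) = ∑ i, Real.sqrt (hH.1.eigenvalues i) := by
  rw [CFC.sqrt_eq_real_sqrt H hH.nonneg, cfcₙ_eq_cfc, hH.1.cfc_eq, IsHermitian.cfc,
    Unitary.conjStarAlgAut_apply, trace_mul_cycle]
  have h1 : (star hH.1.eigenvectorUnitary.1 : Matrix (Fin k) (Fin k) ℝ) *
      hH.1.eigenvectorUnitary.1 = 1 := hH.1.eigenvectorUnitary.2.1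
  rw [h1, Matrix.one_mul, trace_diagonal]
  simp [RCLike.ofReal_real_eq_id]

open scoped MatrixOrder in
lemma aux_traceNorm_eq_trace_of_sq {m k : ℕ} (M : Matrix (Fin m) (Fin k) ℝ)
    (S : Matrix (Fin k) (Fin k) ℝ) (hS : S.PosSemidef) (h : S * S = Mᵀ * M) :
    traceNorm M = trace S := by
  have hH : (Mᵀ * M).PosSemidef := by
    have := Matrix.posSemidef_conjTranspose_mul_self M
    rwa [conjTranspose_eq_transpose_of_trivial] at this
  have hSe : S = CFC.sqrt (Mᵀ * M) := (CFC.sqrt_unique h hS.nonneg).symm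
  rw [hSe, aux_trace_sqrt hH, traceNorm]
  rfl

lemma aux_trace_conj {n : ℕ} (M Q : Matrix (Fin n) (Fin n) ℝ) (hQ : Q * Qᵀ = 1) :
    trace (Qᵀ * M * Q) = trace M := by
  rw [trace_mul_cycle, hQ, Matrix.one_mul]

lemma aux_submatrix_orth {k r : ℕ} (M : Matrix (Fin k) (Fin k) ℝ) (hM : Mᵀ * M = 1)
    (f : Fin r → Fin k) (hf : Function.Injective f) :
    (M.submatrix id f)ᵀ * M.submatrix id f = 1 := by
  ext a b
  have : (Mᵀ * M) (f a) (f b) = (1 : Matrix (Fin k) (Fin k) ℝ) (f a) (f b) := by rw [hM]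
  simp only [Matrix.mul_apply, Matrix.transpose_apply, Matrix.submatrix_apply, id_eq] at this ⊢
  rw [this]
  by_cases hab : a = b
  · simp [hab, Matrix.one_apply]
  · simp [Matrix.one_apply, hab]
    exact fun h => hab (hf h)

lemma aux_rank_eq {n k r : ℕ} (Y : Matrix (Fin n) (Fin r) ℝ) (Z : Matrix (Fin k) (Fin r) ℝ)
    (hY : Yᵀ * Y = 1) (hZ : Zᵀ * Z = 1) : (Y * Zᵀ).rank = r := by
  have h1 : (Y * Zᵀ)ᵀ * (Y * Zᵀ) = Z * Zᵀ := by
    rw [transpose_mul, transpose_transpose, Matrix.mul_assoc, ← Matrix.mul_assoc Yᵀ Y,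
      hY, Matrix.one_mul]
  rw [← Matrix.rank_transpose_mul_self, h1, Matrix.rank_self_mul_transpose,
    ← Matrix.rank_transpose_mul_self, hZ, Matrix.rank_one, Fintype.card_fin]

/-- Theorem 3.5: structure of the maximizers of `f_θ(X_*Q)` over the orthogonal group. -/
theorem stmt10 {n k : ℕ} (hk : 1 ≤ k) (hkn : k < n)
    (A B : Matrix (Fin n) (Fin n) ℝ) (hA : A.IsSymm) (hB : B.PosSemidef)
    (hrank : n - k < B.rank)
    (D : Matrix (Fin n) (Fin k) ℝ) (θ : ℝ) (hθ0 : 0 ≤ θ) (hθ1 : θ ≤ 1)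
    (Xs : Matrix (Fin n) (Fin k) ℝ) (hXs : Xsᵀ * Xs = 1)
    (U V : Matrix (Fin k) (Fin k) ℝ) (hU : Uᵀ * U = 1) (hV : Vᵀ * V = 1)
    (σ : Fin k → ℝ) (hσmono : Antitone σ) (hσpos : ∀ i, 0 ≤ σ i)
    (hSVD : Xsᵀ * D = U * Matrix.diagonal σ * Vᵀ)
    (r : ℕ) (hr : r = (Xsᵀ * D).rank) (hrk : r ≤ k)
    (hσr : ∀ i : Fin k, 0 < σ i ↔ (i : ℕ) < r)
    (Qopt : Matrix (Fin k) (Fin k) ℝ) (hQopt : Qoptᵀ * Qopt = 1)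
    (hmax : ∀ Q : Matrix (Fin k) (Fin k) ℝ, Qᵀ * Q = 1 →
      fTheta A B D θ (Xs * Q) ≤ fTheta A B D θ (Xs * Qopt)) :
    (∃ W : Matrix (Fin (k - r)) (Fin (k - r)) ℝ, Wᵀ * W = 1 ∧
        Xs * Qopt = Xs * colsFirst U r hrk * (colsFirst V r hrk)ᵀ
            + Xs * colsLast U r hrk * W * (colsLast V r hrk)ᵀ
          ∧ (Xs * colsLast U r hrk * W * (colsLast V r hrk)ᵀ).rank = k - r)
      ∧ (Xs * colsFirst U r hrk * (colsFirst V r hrk)ᵀ).rank = r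
      ∧ (Xs * Qopt)ᵀ * D = V * Matrix.diagonal σ * Vᵀ
      ∧ ((Xs * Qopt)ᵀ * D).PosSemidef
      ∧ trace ((Xs * Qopt)ᵀ * D) = traceNorm (Xsᵀ * D) := by
  classical
  -- orthogonality both ways
  have hUU : U * Uᵀ = 1 := mul_eq_one_comm.mp hU
  have hVV : V * Vᵀ = 1 := mul_eq_one_comm.mp hV
  have hQQ : Qopt * Qoptᵀ = 1 := mul_eq_one_comm.mp hQopt
  set N : Matrix (Fin k) (Fin k) ℝ := Xsᵀ * D with hN
  -- reduction of the objective
  have hcB : 0 < trace (Xsᵀ * B * Xs) := aux_cB_pos B hB hrank hkn Xs hXs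
  have hden : 0 < trace (Xsᵀ * B * Xs) ^ θ := Real.rpow_pos_of_pos hcB θ
  have hred : ∀ Q : Matrix (Fin k) (Fin k) ℝ, Qᵀ * Q = 1 →
      fTheta A B D θ (Xs * Q) =
        (trace (Xsᵀ * A * Xs) + trace (Qᵀ * N)) / trace (Xsᵀ * B * Xs) ^ θ := by
    intro Q hQ
    have hQQ' : Q * Qᵀ = 1 := mul_eq_one_comm.mp hQ
    have e1 : (Xs * Q)ᵀ * A * (Xs * Q) = Qᵀ * (Xsᵀ * A * Xs) * Q := by
      rw [transpose_mul]; simp only [Matrix.mul_assoc]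
    have e2 : (Xs * Q)ᵀ * B * (Xs * Q) = Qᵀ * (Xsᵀ * B * Xs) * Q := by
      rw [transpose_mul]; simp only [Matrix.mul_assoc]
    have e3 : (Xs * Q)ᵀ * D = Qᵀ * N := by
      rw [transpose_mul, hN, Matrix.mul_assoc]
    rw [fTheta, e1, e2, e3, aux_trace_conj _ _ hQQ', aux_trace_conj _ _ hQQ']
  have hkey : ∀ Q : Matrix (Fin k) (Fin k) ℝ, Qᵀ * Q = 1 →
      trace (Qᵀ * N) ≤ trace (Qoptᵀ * N) := by
    intro Q hQ
    have := hmax Q hQ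
    rw [hred Q hQ, hred Qopt hQopt] at this
    have := (div_le_div_iff_of_pos_right hden).mp this
    linarith
  -- the orthogonal matrix P
  set P : Matrix (Fin k) (Fin k) ℝ := Uᵀ * Qopt * V with hPdef
  have hPt : Pᵀ = Vᵀ * (Qoptᵀ * U) := by
    rw [hPdef, transpose_mul, transpose_mul, transpose_transpose]
  have hPo : Pᵀ * P = 1 := by
    rw [hPt, hPdef]
    calc Vᵀ * (Qoptᵀ * U) * (Uᵀ * Qopt * V)
        = Vᵀ * (Qoptᵀ * ((U * Uᵀ) * (Qopt * V))) := by simp only [Matrix.mul_assoc]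
      _ = 1 := by rw [hUU, Matrix.one_mul, ← Matrix.mul_assoc Qoptᵀ Qopt V, hQopt,
            Matrix.one_mul, hV]
  have hPPt : P * Pᵀ = 1 := mul_eq_one_comm.mp hPo
  have hQeq : Qopt = U * P * Vᵀ := by
    rw [hPdef]
    calc Qopt = (U * Uᵀ) * Qopt * (V * Vᵀ) := by rw [hUU, hVV, Matrix.one_mul, Matrix.mul_one]
      _ = U * (Uᵀ * Qopt * V) * Vᵀ := by simp only [Matrix.mul_assoc]
  -- trace formulas
  have hPtd : trace (Qoptᵀ * N) = ∑ i, P i i * σ i := by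
    have : Qoptᵀ * N = (Qoptᵀ * U * Matrix.diagonal σ) * Vᵀ := by
      rw [hSVD]; simp only [Matrix.mul_assoc]
    have hPt2 : Pᵀ = Vᵀ * Qoptᵀ * U := by rw [hPt, Matrix.mul_assoc]
    rw [this, trace_mul_comm, ← Matrix.mul_assoc, ← Matrix.mul_assoc, ← hPt2]
    simp [trace, Matrix.mul_apply, Matrix.diagonal]
  have hUVt : (U * Vᵀ)ᵀ * (U * Vᵀ) = 1 := by
    rw [transpose_mul, transpose_transpose]
    calc V * Uᵀ * (U * Vᵀ) = V * ((Uᵀ * U) * Vᵀ) := by simp only [Matrix.mul_assoc]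
      _ = 1 := by rw [hU, Matrix.one_mul, hVV]
  have htUV : trace ((U * Vᵀ)ᵀ * N) = ∑ i, σ i := by
    rw [hSVD, transpose_mul, transpose_transpose]
    have : V * Uᵀ * (U * Matrix.diagonal σ * Vᵀ) = V * Matrix.diagonal σ * Vᵀ := by
      calc V * Uᵀ * (U * Matrix.diagonal σ * Vᵀ)
          = V * ((Uᵀ * U) * (Matrix.diagonal σ * Vᵀ)) := by simp only [Matrix.mul_assoc]
        _ = V * Matrix.diagonal σ * Vᵀ := by rw [hU, Matrix.one_mul, Matrix.mul_assoc]
    rw [this, trace_mul_cycle, hV, Matrix.one_mul, trace_diagonal]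
  -- entries of P
  have hcolsq : ∀ i : Fin k, ∑ j, (P j i)^2 = 1 := by
    intro i
    have : (Pᵀ * P) i i = (1 : Matrix (Fin k) (Fin k) ℝ) i i := by rw [hPo]
    simpa [Matrix.mul_apply, Matrix.one_apply, sq] using this
  have hrowsq : ∀ i : Fin k, ∑ j, (P i j)^2 = 1 := by
    intro i
    have : (P * Pᵀ) i i = (1 : Matrix (Fin k) (Fin k) ℝ) i i := by rw [hPPt]
    simpa [Matrix.mul_apply, Matrix.one_apply, sq] using this
  have hPle : ∀ i : Fin k, P i i ≤ 1 := by
    intro i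
    have h1 : (P i i)^2 ≤ 1 := by
      have := hcolsq i
      calc (P i i)^2 ≤ ∑ j, (P j i)^2 :=
        Finset.single_le_sum (fun j _ => sq_nonneg (P j i)) (Finset.mem_univ i)
      _ = 1 := this
    nlinarith [sq_nonneg (P i i - 1), sq_nonneg (P i i + 1)]
  have hsum_eq : ∀ i : Fin k, P i i * σ i = σ i := by
    have hge : ∑ i, σ i ≤ ∑ i, P i i * σ i := by
      have := hkey (U * Vᵀ) hUVt
      rw [hPtd] at this; rw [← htUV]; exact this
    have hle : ∀ i ∈ Finset.univ, P i i * σ i ≤ σ i := fun i _ =>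
      mul_le_of_le_one_left (hσpos i) (hPle i)
    have heq : ∑ i, P i i * σ i = ∑ i, σ i :=
      le_antisymm (Finset.sum_le_sum hle) hge
    intro i
    exact (Finset.sum_eq_sum_iff_of_le hle).mp heq i (Finset.mem_univ i)
  have hPdiag : ∀ i : Fin k, (i : ℕ) < r → P i i = 1 := by
    intro i hi
    have hσi : 0 < σ i := (hσr i).mpr hi
    exact mul_right_cancel₀ (ne_of_gt hσi) (by rw [hsum_eq i, one_mul])
  -- off-diagonal vanishing
  have hPcol : ∀ i j : Fin k, (j : ℕ) < r → P i j = if i = j then 1 else 0 := by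
    intro i j hj
    by_cases hij : i = j
    · simp [hij, hPdiag j hj]
    · simp only [hij, if_false]
      have h1 := hcolsq j
      have h2 : ∑ l ∈ Finset.univ.erase j, (P l j)^2 = 0 := by
        have h3 : (P j j)^2 + ∑ l ∈ Finset.univ.erase j, (P l j)^2 = ∑ l, (P l j)^2 :=
          Finset.add_sum_erase _ (fun l => (P l j)^2) (Finset.mem_univ j)
        rw [hPdiag j hj, h1] at h3
        linarith
      have := (Finset.sum_eq_zero_iff_of_nonneg (fun l _ => sq_nonneg (P l j))).mp h2 i
        (Finset.mem_erase.mpr ⟨hij, Finset.mem_univ i⟩)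
      exact pow_eq_zero_iff (by norm_num) |>.mp this
  have hProw : ∀ i j : Fin k, (i : ℕ) < r → P i j = if j = i then 1 else 0 := by
    intro i j hi
    by_cases hij : j = i
    · simp [hij, hPdiag i hi]
    · simp only [hij, if_false]
      have h1 := hrowsq i
      have h2 : ∑ l ∈ Finset.univ.erase i, (P i l)^2 = 0 := by
        have h3 : (P i i)^2 + ∑ l ∈ Finset.univ.erase i, (P i l)^2 = ∑ l, (P i l)^2 :=
          Finset.add_sum_erase _ (fun l => (P i l)^2) (Finset.mem_univ i)
        rw [hPdiag i hi, h1] at h3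
        linarith
      have := (Finset.sum_eq_zero_iff_of_nonneg (fun l _ => sq_nonneg (P i l))).mp h2 j
        (Finset.mem_erase.mpr ⟨hij, Finset.mem_univ j⟩)
      exact pow_eq_zero_iff (by norm_num) |>.mp this
  -- the block W
  have he2lt : ∀ b : Fin (k - r), r + b.1 < k := fun b => by omega
  set e2 : Fin (k - r) → Fin k := fun b => ⟨r + b.1, he2lt b⟩ with he2
  set W : Matrix (Fin (k - r)) (Fin (k - r)) ℝ := Matrix.of fun a b => P (e2 a) (e2 b)
    with hWdef
  have he2ne : ∀ (a : Fin (k - r)) (c : Fin r), e2 a ≠ Fin.castLE hrk c := by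
    intro a c h
    apply_fun Fin.val at h
    simp [he2] at h
    omega
  have he2inj : Function.Injective e2 := by
    intro x y h
    apply_fun Fin.val at h
    simp [he2] at h
    exact Fin.ext h
  have hWo : Wᵀ * W = 1 := by
    ext a b
    have h1 : ∑ j, P j (e2 a) * P j (e2 b)
        = ∑ c : Fin (k - r), P (e2 c) (e2 a) * P (e2 c) (e2 b) := by
      rw [aux_sum_split hrk (fun j => P j (e2 a) * P j (e2 b))]
      have hz : ∑ c : Fin r,
          P (Fin.castLE hrk c) (e2 a) * P (Fin.castLE hrk c) (e2 b) = 0 :=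
        Finset.sum_eq_zero fun c _ => by
          rw [hProw _ _ (by simpa using c.2), if_neg (he2ne a c), zero_mul]
      rw [hz, zero_add]
    calc (Wᵀ * W) a b = ∑ c, P (e2 c) (e2 a) * P (e2 c) (e2 b) := by
          simp [hWdef, Matrix.mul_apply]
      _ = ∑ j, P j (e2 a) * P j (e2 b) := h1.symm
      _ = (1 : Matrix (Fin k) (Fin k) ℝ) (e2 a) (e2 b) := by
          rw [← hPo]; simp [Matrix.mul_apply]
      _ = (1 : Matrix (Fin (k - r)) (Fin (k - r)) ℝ) a b := by
          by_cases hab : a = b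
          · simp [hab, Matrix.one_apply]
          · have : e2 a ≠ e2 b := fun h => hab (he2inj h)
            simp [Matrix.one_apply, hab, this]
  -- the decomposition
  have hUPV : U * P * Vᵀ = colsFirst U r hrk * (colsFirst V r hrk)ᵀ
      + colsLast U r hrk * W * (colsLast V r hrk)ᵀ := by
    ext i j
    have hUP1 : ∀ a : Fin r, (U * P) i (Fin.castLE hrk a) = U i (Fin.castLE hrk a) := by
      intro a
      rw [Matrix.mul_apply]
      have h1 : ∀ b : Fin k, U i b * P b (Fin.castLE hrk a)
          = if b = Fin.castLE hrk a then U i b else 0 := by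
        intro b
        rw [hPcol b _ (by simpa using a.2)]
        by_cases hb : b = Fin.castLE hrk a <;> simp [hb]
      rw [Finset.sum_congr rfl (fun b _ => h1 b), Finset.sum_ite_eq' Finset.univ]
      simp
    have hUP2 : ∀ a : Fin (k - r), (U * P) i (e2 a)
        = ∑ b : Fin (k - r), U i (e2 b) * W b a := by
      intro a
      rw [Matrix.mul_apply, aux_sum_split hrk (fun b => U i b * P b (e2 a))]
      have hz : ∑ c : Fin r, U i (Fin.castLE hrk c) * P (Fin.castLE hrk c) (e2 a) = 0 :=
        Finset.sum_eq_zero fun c _ => by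
          rw [hProw _ _ (by simpa using c.2), if_neg (he2ne a c), mul_zero]
      rw [hz, zero_add]
      rfl
    have lhs_eq : (U * P * Vᵀ) i j = ∑ a, (U * P) i a * V j a := by
      simp [Matrix.mul_apply]
    rw [lhs_eq, aux_sum_split hrk (fun a => (U * P) i a * V j a), Matrix.add_apply]
    congr 1
    · rw [Finset.sum_congr rfl (fun a _ => by rw [hUP1 a])]
      simp [colsFirst, Matrix.mul_apply]
    · have : ∀ a : Fin (k - r), (U * P) i (e2 a) * V j (e2 a)
          = (∑ b : Fin (k - r), U i (e2 b) * W b a) * V j (e2 a) := fun a => by rw [hUP2 a]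
      rw [Finset.sum_congr rfl (fun a _ => this a)]
      simp [colsLast, Matrix.mul_apply, Finset.sum_mul]
      rfl
  have hQdecomp : Xs * Qopt = Xs * colsFirst U r hrk * (colsFirst V r hrk)ᵀ
      + Xs * colsLast U r hrk * W * (colsLast V r hrk)ᵀ := by
    calc Xs * Qopt = Xs * (U * P * Vᵀ) := by rw [← hQeq]
      _ = Xs * (colsFirst U r hrk * (colsFirst V r hrk)ᵀ
            + colsLast U r hrk * W * (colsLast V r hrk)ᵀ) := by rw [hUPV]
      _ = _ := by rw [Matrix.mul_add]; simp only [Matrix.mul_assoc]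
  -- orthonormal columns
  have hCU1 : (colsFirst U r hrk)ᵀ * colsFirst U r hrk = 1 :=
    aux_submatrix_orth U hU _ (Fin.castLE_injective hrk)
  have hCV1 : (colsFirst V r hrk)ᵀ * colsFirst V r hrk = 1 :=
    aux_submatrix_orth V hV _ (Fin.castLE_injective hrk)
  have hCU2 : (colsLast U r hrk)ᵀ * colsLast U r hrk = 1 :=
    aux_submatrix_orth U hU _ (by intro x y h; apply_fun Fin.val at h; simp at h; exact Fin.ext h)
  have hCV2 : (colsLast V r hrk)ᵀ * colsLast V r hrk = 1 :=
    aux_submatrix_orth V hV _ (by intro x y h; apply_fun Fin.val at h; simp at h; exact Fin.ext h)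
  have hXmul : ∀ {s : ℕ} (C : Matrix (Fin k) (Fin s) ℝ), Cᵀ * C = 1 →
      (Xs * C)ᵀ * (Xs * C) = 1 := by
    intro s C hC
    calc (Xs * C)ᵀ * (Xs * C) = Cᵀ * ((Xsᵀ * Xs) * C) := by
          rw [transpose_mul]; simp only [Matrix.mul_assoc]
      _ = 1 := by rw [hXs, Matrix.one_mul, hC]
  have hrank1 : (Xs * colsFirst U r hrk * (colsFirst V r hrk)ᵀ).rank = r :=
    aux_rank_eq _ _ (hXmul _ hCU1) hCV1
  have hY2 : (Xs * colsLast U r hrk * W)ᵀ * (Xs * colsLast U r hrk * W) = 1 := by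
    calc (Xs * colsLast U r hrk * W)ᵀ * (Xs * colsLast U r hrk * W)
        = Wᵀ * (((Xs * colsLast U r hrk)ᵀ * (Xs * colsLast U r hrk)) * W) := by
          rw [transpose_mul]; simp only [Matrix.mul_assoc]
      _ = 1 := by rw [hXmul _ hCU2, Matrix.one_mul, hWo]
  have hrank2 : (Xs * colsLast U r hrk * W * (colsLast V r hrk)ᵀ).rank = k - r :=
    aux_rank_eq _ _ hY2 hCV2
  -- the product identity
  have hPS : Pᵀ * Matrix.diagonal σ = Matrix.diagonal σ := by
    ext i j
    rw [Matrix.mul_diagonal, Matrix.transpose_apply]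
    by_cases hj : (j : ℕ) < r
    · rw [hProw j i hj]
      by_cases hij : i = j
      · simp [hij]
      · simp [hij, Matrix.diagonal_apply_ne _ hij]
    · have hσj : σ j = 0 := le_antisymm (not_lt.mp fun h => hj ((hσr j).mp h)) (hσpos j)
      rw [hσj, mul_zero]
      rcases eq_or_ne i j with h | h
      · subst h; simp [hσj]
      · simp [Matrix.diagonal_apply_ne _ h]
  have hQt : Qoptᵀ = V * (Pᵀ * Uᵀ) := by
    rw [hQeq, transpose_mul, transpose_mul, transpose_transpose]
  have hXQD : (Xs * Qopt)ᵀ * D = V * Matrix.diagonal σ * Vᵀ := by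
    calc (Xs * Qopt)ᵀ * D = Qoptᵀ * N := by rw [transpose_mul, hN, Matrix.mul_assoc]
      _ = V * (Pᵀ * ((Uᵀ * U) * (Matrix.diagonal σ * Vᵀ))) := by
          rw [hQt, hSVD]; simp only [Matrix.mul_assoc]
      _ = V * ((Pᵀ * Matrix.diagonal σ) * Vᵀ) := by
          rw [hU, Matrix.one_mul, ← Matrix.mul_assoc Pᵀ (Matrix.diagonal σ) Vᵀ]
      _ = V * Matrix.diagonal σ * Vᵀ := by rw [hPS, Matrix.mul_assoc]
  have hPSD : ((Xs * Qopt)ᵀ * D).PosSemidef := by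
    rw [hXQD]
    have := (Matrix.posSemidef_diagonal_iff.mpr fun i => hσpos i).mul_mul_conjTranspose_same V
    rwa [conjTranspose_eq_transpose_of_trivial] at this
  have hSsq : (V * Matrix.diagonal σ * Vᵀ) * (V * Matrix.diagonal σ * Vᵀ) = Nᵀ * N := by
    have h1 : (V * Matrix.diagonal σ * Vᵀ) * (V * Matrix.diagonal σ * Vᵀ)
        = V * (Matrix.diagonal σ * ((Vᵀ * V) * (Matrix.diagonal σ * Vᵀ))) := by
      simp only [Matrix.mul_assoc]
    have h2 : Nᵀ * N = V * ((Matrix.diagonal σ)ᵀ * ((Uᵀ * U) * (Matrix.diagonal σ * Vᵀ))) := by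
      rw [hSVD, transpose_mul, transpose_mul, transpose_transpose]
      simp only [Matrix.mul_assoc]
    rw [h1, h2, hV, hU, Matrix.diagonal_transpose]
  have hPSDS : (V * Matrix.diagonal σ * Vᵀ).PosSemidef := hXQD ▸ hPSD
  have htrace : trace ((Xs * Qopt)ᵀ * D) = traceNorm N := by
    rw [hXQD, aux_traceNorm_eq_trace_of_sq N _ hPSDS hSsq]
  exact ⟨⟨W, hWo, hQdecomp, hrank2⟩, hrank1, hXQD, hPSD, htrace⟩

end
end
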